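/- arXiv:2008.09560 — 3 statements merged into one kernel-verified Lean document; each statement's English description precedes it below -/
import Mathlib

section
/- Let p be an odd prime and let n ≥ 1 be an integer. Let (a_k)_{k≥0} be a sequence in ℚ_p with a_0 = 0 and such that ‖k · a_k‖_p ≤ 1 for every k ≥ 1 (i.e. the formal derivative ∑_{k≥1} k a_k t^{k-1} of the power series F(t) = ∑_{k≥1} a_k t^k has ℤ_p-coefficients). Suppose there exists x ∈ ℚ_p with x ≠ 0 and ‖x‖_p ≤ p^{-n} such that the series ∑_{k≥1} a_k x^k converges with sum 0. Then ‖a_1‖_p ≤ p^{-n}. -/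
private lemma aux_lt_three_pow (k : ℕ) : k + 2 < 3 ^ (k + 1) := by
  induction k with
  | zero => norm_num
  | succ k ih =>
    have : 3 ^ (k + 2) = 3 * 3 ^ (k + 1) := by ring
    omega

private lemma aux_padicValNat_le (p : ℕ) (hp : p.Prime) (hp3 : 3 ≤ p) (k : ℕ) :
    padicValNat p (k + 2) ≤ k := by
  by_contra h
  push_neg at h
  have hdvd : p ^ (k + 1) ∣ k + 2 :=
    dvd_trans (pow_dvd_pow p h) (pow_padicValNat_dvd (p := p) (n := k + 2))
  have h1 : p ^ (k + 1) ≤ k + 2 := Nat.le_of_dvd (by omega) hdvd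
  have h2 : 3 ^ (k + 1) ≤ p ^ (k + 1) := Nat.pow_le_pow_left hp3 _
  have := aux_lt_three_pow k
  omega

/-- Newton polygon computation (odd prime case) underlying Lemma 3.2.
If `a₀ = 0`, the formal derivative `∑_{k≥1} k a_k t^{k-1}` has `ℤ_p`-coefficients
(i.e. `‖k a_k‖_p ≤ 1` for all `k ≥ 1`), and there is a nonzero `x` with
`‖x‖_p ≤ p^{-n}` at which `∑_{k≥1} a_k x^k = 0`, then `‖a₁‖_p ≤ p^{-n}`. -/
theorem stmt_0 (p : ℕ) [Fact p.Prime] (hodd : Odd p) (n : ℕ) (hn : 1 ≤ n)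
    (a : ℕ → ℚ_[p]) (ha0 : a 0 = 0)
    (hint : ∀ k : ℕ, 1 ≤ k → ‖(k : ℚ_[p]) * a k‖ ≤ 1)
    (x : ℚ_[p]) (hx0 : x ≠ 0) (hx : ‖x‖ ≤ (p : ℝ) ^ (-(n : ℤ)))
    (hsum : HasSum (fun k : ℕ => a (k + 1) * x ^ (k + 1)) 0) :
    ‖a 1‖ ≤ (p : ℝ) ^ (-(n : ℤ)) := by
  have hp : p.Prime := Fact.out
  have hp3 : 3 ≤ p := by
    have h2 := hp.two_le
    have hne : p ≠ 2 := by rintro rfl; simp [Nat.odd_iff] at hodd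
    omega
  have hppos : (0 : ℝ) < p := by exact_mod_cast hp.pos
  have hpne : (p : ℝ) ≠ 0 := ne_of_gt hppos
  have hxpos : (0 : ℝ) < ‖x‖ := norm_pos_iff.mpr hx0
  set C : ℝ := ‖x‖ * (p : ℝ) ^ (-(n : ℤ)) with hC
  have hCpos : 0 ≤ C := by positivity
  -- per-term bound for k ≥ 2
  have key : ∀ k : ℕ, ‖a (k + 2) * x ^ (k + 2)‖ ≤ C := by
    intro k
    by_cases hak : a (k + 2) = 0
    · simp [hak, hCpos]
    -- bound on ‖a (k+2)‖
    have hmne : ((k + 2 : ℕ) : ℚ_[p]) ≠ 0 := by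
      exact Nat.cast_ne_zero.mpr (by omega)
    have hnorm_m : ‖((k + 2 : ℕ) : ℚ_[p])‖ = (p : ℝ) ^ (-(padicValNat p (k + 2) : ℤ)) := by
      rw [Padic.norm_eq_zpow_neg_valuation hmne, Padic.valuation_natCast]
    have hbound : ‖a (k + 2)‖ ≤ (p : ℝ) ^ ((padicValNat p (k + 2) : ℤ)) := by
      have h1 := hint (k + 2) (by omega)
      rw [Padic.padicNormE.mul, hnorm_m] at h1
      have hz : (0 : ℝ) < (p : ℝ) ^ (-(padicValNat p (k + 2) : ℤ)) := zpow_pos hppos _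
      calc ‖a (k + 2)‖ = ((p : ℝ) ^ (-(padicValNat p (k + 2) : ℤ)) * ‖a (k + 2)‖)
            * (p : ℝ) ^ ((padicValNat p (k + 2) : ℤ)) := by
            rw [mul_assoc, mul_comm ‖a (k + 2)‖, ← mul_assoc, ← zpow_add₀ hpne]
            simp
        _ ≤ 1 * (p : ℝ) ^ ((padicValNat p (k + 2) : ℤ)) := by
            apply mul_le_mul_of_nonneg_right h1 (le_of_lt (zpow_pos hppos _))
        _ = (p : ℝ) ^ ((padicValNat p (k + 2) : ℤ)) := one_mul _
    have hval : (padicValNat p (k + 2) : ℤ) ≤ (n : ℤ) * k := by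
      have := aux_padicValNat_le p hp hp3 k
      have : (padicValNat p (k + 2) : ℤ) ≤ (k : ℤ) := by exact_mod_cast this
      have hk : (k : ℤ) ≤ (n : ℤ) * k := by
        nlinarith [Int.ofNat_nonneg k, (by exact_mod_cast hn : (1 : ℤ) ≤ (n : ℤ))]
      omega
    have hbound2 : ‖a (k + 2)‖ ≤ (p : ℝ) ^ ((n : ℤ) * k) :=
      hbound.trans (zpow_le_zpow_right₀ (by exact_mod_cast hp.one_lt.le) hval)
    have hxk : ‖x ^ (k + 2)‖ ≤ ‖x‖ * ((p : ℝ) ^ (-(n : ℤ))) ^ (k + 1) := by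
      rw [norm_pow]
      have : ‖x‖ ^ (k + 2) = ‖x‖ * ‖x‖ ^ (k + 1) := by ring
      rw [this]
      exact mul_le_mul_of_nonneg_left
        (pow_le_pow_left₀ (norm_nonneg x) hx (k + 1)) (norm_nonneg x)
    calc ‖a (k + 2) * x ^ (k + 2)‖ = ‖a (k + 2)‖ * ‖x ^ (k + 2)‖ := Padic.padicNormE.mul _ _
      _ ≤ (p : ℝ) ^ ((n : ℤ) * k) * (‖x‖ * ((p : ℝ) ^ (-(n : ℤ))) ^ (k + 1)) := by
          apply mul_le_mul hbound2 hxk (norm_nonneg _) (le_of_lt (zpow_pos hppos _))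
      _ = ‖x‖ * ((p : ℝ) ^ ((n : ℤ) * k) * (p : ℝ) ^ (-(n : ℤ) * ((k : ℤ) + 1))) := by
          rw [← zpow_natCast ((p : ℝ) ^ (-(n : ℤ))) (k + 1), ← zpow_mul]
          push_cast
          ring
      _ = C := by
          rw [← zpow_add₀ hpne, hC]
          congr 2
          push_cast
          ring
  -- shift the sum
  have hshift : HasSum (fun k : ℕ => a (k + 1 + 1) * x ^ (k + 1 + 1))
      (0 - ∑ i ∈ Finset.range 1, a (i + 1) * x ^ (i + 1)) :=
    (hasSum_nat_add_iff' 1).mpr hsum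
  simp only [Finset.range_one, Finset.sum_singleton, zero_sub, pow_one, zero_add] at hshift
  have htsum : (∑' k : ℕ, a (k + 1 + 1) * x ^ (k + 1 + 1)) = -(a 1 * x) := hshift.tsum_eq
  have hnorm : ‖a 1 * x‖ ≤ C := by
    rw [show ‖a 1 * x‖ = ‖-(a 1 * x)‖ by rw [norm_neg], ← htsum]
    exact IsUltrametricDist.norm_tsum_le_of_forall_le_of_nonneg hCpos (fun k => key k)
  rw [Padic.padicNormE.mul, hC] at hnorm
  rw [mul_comm] at hnorm
  exact le_of_mul_le_mul_left hnorm hxpos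
end

section
/- Let p be any prime and let n ≥ 1 be an integer. Let (a_k)_{k≥0} be a sequence in ℚ_p with a_0 = 0 and such that ‖k · a_k‖_p ≤ 1 for every k ≥ 1 (i.e. the formal derivative ∑_{k≥1} k a_k t^{k-1} of the power series F(t) = ∑_{k≥1} a_k t^k has ℤ_p-coefficients). Suppose there exists x ∈ ℚ_p with x ≠ 0 and ‖x‖_p ≤ p^{-n} such that the series ∑_{k≥1} a_k x^k converges with sum 0. Then ‖a_1‖_p ≤ p^{1-n}. -/
/-- Ultrametric bound for sums: if every term is bounded by `C ≥ 0`, so is the sum. -/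
lemma norm_hasSum_le {p : ℕ} [Fact p.Prime] {f : ℕ → ℚ_[p]} {s : ℚ_[p]} {C : ℝ}
    (h : HasSum f s) (hC : 0 ≤ C) (hf : ∀ i, ‖f i‖ ≤ C) : ‖s‖ ≤ C := by
  refine le_of_tendsto' ((continuous_norm.tendsto s).comp h) (fun t => ?_)
  exact IsUltrametricDist.norm_sum_le_of_forall_le_of_nonneg hC (fun i _ => hf i)

/-- Newton polygon computation (any prime) underlying Lemma 3.2.
If `a₀ = 0`, the formal derivative `∑_{k≥1} k a_k t^{k-1}` has `ℤ_p`-coefficients,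
and there is a nonzero `x` with `‖x‖_p ≤ p^{-n}` at which `∑_{k≥1} a_k x^k = 0`,
then `‖a₁‖_p ≤ p^{1-n}`. -/
theorem stmt_1 (p : ℕ) [Fact p.Prime] (n : ℕ) (hn : 1 ≤ n)
    (a : ℕ → ℚ_[p]) (ha0 : a 0 = 0)
    (hint : ∀ k : ℕ, 1 ≤ k → ‖(k : ℚ_[p]) * a k‖ ≤ 1)
    (x : ℚ_[p]) (hx0 : x ≠ 0) (hx : ‖x‖ ≤ (p : ℝ) ^ (-(n : ℤ)))
    (hsum : HasSum (fun k : ℕ => a (k + 1) * x ^ (k + 1)) 0) :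
    ‖a 1‖ ≤ (p : ℝ) ^ ((1 : ℤ) - (n : ℤ)) := by
  have hp : 1 < p := (Fact.out : p.Prime).one_lt
  have hP1 : (1 : ℝ) < (p : ℝ) := by exact_mod_cast hp
  have hP0 : (0 : ℝ) < (p : ℝ) := by linarith
  -- shift the sum by one
  have hsum2 : HasSum (fun k : ℕ => a (k + 1 + 1) * x ^ (k + 1 + 1))
      (0 - ∑ i ∈ Finset.range 1, a (i + 1) * x ^ (i + 1)) :=
    (hasSum_nat_add_iff' 1).mpr hsum
  have hC0 : (0 : ℝ) ≤ (p : ℝ) ^ ((1 : ℤ) - (n : ℤ)) * ‖x‖ :=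
    mul_nonneg (zpow_nonneg (le_of_lt hP0) _) (norm_nonneg _)
  -- bound each term
  have hterm : ∀ i : ℕ, ‖a (i + 1 + 1) * x ^ (i + 1 + 1)‖ ≤ (p : ℝ) ^ ((1 : ℤ) - (n : ℤ)) * ‖x‖ := by
    intro i
    set m := i + 2 with hm
    have hm0 : (m : ℚ_[p]) ≠ 0 := by exact_mod_cast (by omega : m ≠ 0)
    set v := padicValNat p m with hv
    have hnm : ‖(m : ℚ_[p])‖ = (p : ℝ) ^ (-(v : ℤ)) := by
      rw [Padic.norm_eq_zpow_neg_valuation hm0, Padic.valuation_natCast]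
    -- v ≤ i + 1
    have hvle : v ≤ i + 1 := by
      have hdvd : p ^ v ∣ m := pow_padicValNat_dvd
      have h1 : p ^ v ≤ m := Nat.le_of_dvd (by omega) hdvd
      have h2 : m < p ^ m := Nat.lt_pow_self (n := m) hp
      have : v < m := by
        by_contra hcon
        exact absurd (lt_of_le_of_lt h1 h2)
          (not_lt.mpr (Nat.pow_le_pow_right (by omega) (not_lt.mp hcon)))
      omega
    -- ‖a m‖ ≤ p ^ v
    have ham : ‖a m‖ ≤ (p : ℝ) ^ (v : ℤ) := by
      have h2 : (p : ℝ) ^ (-(v : ℤ)) * ‖a m‖ ≤ 1 := by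
        rw [← hnm, ← norm_mul]; exact hint m (by omega)
      calc ‖a m‖ = (p : ℝ) ^ (v : ℤ) * ((p : ℝ) ^ (-(v : ℤ)) * ‖a m‖) := by
            rw [← mul_assoc, ← zpow_add₀ (ne_of_gt hP0), add_neg_cancel, zpow_zero, one_mul]
        _ ≤ (p : ℝ) ^ (v : ℤ) * 1 := by
            exact mul_le_mul_of_nonneg_left h2 (zpow_nonneg (le_of_lt hP0) _)
        _ = (p : ℝ) ^ (v : ℤ) := mul_one _
    have hxm : ‖x ^ m‖ ≤ ((p : ℝ) ^ (-(n : ℤ))) ^ (i + 1) * ‖x‖ := by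
      rw [norm_pow, hm, show i + 2 = (i + 1) + 1 from rfl, pow_succ]
      exact mul_le_mul_of_nonneg_right
        (pow_le_pow_left₀ (norm_nonneg x) hx _) (norm_nonneg x)
    have hkey : (p : ℝ) ^ (v : ℤ) * ((p : ℝ) ^ (-(n : ℤ))) ^ (i + 1)
        ≤ (p : ℝ) ^ ((1 : ℤ) - (n : ℤ)) := by
      rw [← zpow_natCast ((p : ℝ) ^ (-(n : ℤ))) (i + 1), ← zpow_mul,
        ← zpow_add₀ (ne_of_gt hP0)]
      apply zpow_le_zpow_right₀ (le_of_lt hP1)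
      have hvle' : (v : ℤ) ≤ (i : ℤ) + 1 := by exact_mod_cast hvle
      have hn' : (1 : ℤ) ≤ (n : ℤ) := by exact_mod_cast hn
      have hi0 : (0 : ℤ) ≤ (i : ℤ) := Int.natCast_nonneg i
      push_cast
      nlinarith [mul_le_mul_of_nonneg_left hn' hi0]
    calc ‖a (i + 1 + 1) * x ^ (i + 1 + 1)‖ = ‖a m‖ * ‖x ^ m‖ := by
          rw [norm_mul]
      _ ≤ (p : ℝ) ^ (v : ℤ) * (((p : ℝ) ^ (-(n : ℤ))) ^ (i + 1) * ‖x‖) := by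
          apply mul_le_mul ham hxm (norm_nonneg _) (zpow_nonneg (le_of_lt hP0) _)
      _ = (p : ℝ) ^ (v : ℤ) * ((p : ℝ) ^ (-(n : ℤ))) ^ (i + 1) * ‖x‖ := by ring
      _ ≤ (p : ℝ) ^ ((1 : ℤ) - (n : ℤ)) * ‖x‖ :=
          mul_le_mul_of_nonneg_right hkey (norm_nonneg x)
  have hbound := norm_hasSum_le hsum2 hC0 hterm
  rw [Finset.sum_range_one, pow_one, zero_sub, norm_neg, norm_mul] at hbound
  have hxpos : 0 < ‖x‖ := norm_pos_iff.mpr hx0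
  exact (mul_le_mul_iff_of_pos_right hxpos).mp hbound
end

section
/- Let p be an odd prime and let n ≥ 1 be an integer. Let (a_k)_{k≥0} be a sequence in ℚ_p such that ‖k · a_k‖_p ≤ 1 for every k ≥ 1 (i.e. the formal derivative ∑_{k≥1} k a_k t^{k-1} of the power series F(t) = ∑_{k≥0} a_k t^k has ℤ_p-coefficients). Suppose x, y ∈ ℚ_p are distinct points with ‖x‖_p ≤ p^{-n} and ‖y‖_p ≤ p^{-n}, and that there is some s ∈ ℚ_p such that ∑_{k≥0} a_k x^k and ∑_{k≥0} a_k y^k both converge with the same sum s. Then the derivative series ∑_{k≥1} k a_k x^{k-1} converges and ‖∑_{k≥1} k a_k x^{k-1}‖_p ≤ p^{-n}. -/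
private lemma three_pow_aux (v : ℕ) (hv : 1 ≤ v) : v + 2 ≤ 3 ^ v := by
  induction v with
  | zero => omega
  | succ w ih =>
    rcases Nat.eq_zero_or_pos w with rfl | hw
    · norm_num
    · have := ih hw
      have h3 : 3 ^ (w + 1) = 3 * 3 ^ w := by ring
      omega

private lemma norm_natCast_le_one (p : ℕ) [Fact p.Prime] (m : ℕ) :
    ‖((m : ℕ) : ℚ_[p])‖ ≤ 1 := by
  simpa using Padic.norm_int_le_one (p := p) (m : ℤ)

private lemma key_inv (p : ℕ) [Fact p.Prime] (hp3 : 3 ≤ p) (m : ℕ) :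
    ‖(((m + 2 : ℕ)) : ℚ_[p])⁻¹‖ ≤ (p : ℝ) ^ m := by
  have h0 : ((m + 2 : ℕ) : ℚ_[p]) ≠ 0 := Nat.cast_ne_zero.mpr (by omega)
  rw [norm_inv, Padic.norm_eq_zpow_neg_valuation h0, Padic.valuation_natCast, ← zpow_neg, neg_neg]
  have hv : padicValNat p (m + 2) ≤ m := by
    set v := padicValNat p (m + 2) with hvdef
    rcases Nat.eq_zero_or_pos v with h | h
    · omega
    · have hd : p ^ v ∣ m + 2 := pow_padicValNat_dvd
      have h1 : p ^ v ≤ m + 2 := Nat.le_of_dvd (by omega) hd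
      have h2 : v + 2 ≤ 3 ^ v := three_pow_aux v h
      have h3 : 3 ^ v ≤ p ^ v := Nat.pow_le_pow_left hp3 v
      omega
  have hp1 : (1 : ℝ) ≤ (p : ℝ) := by exact_mod_cast (by omega : 1 ≤ p)
  calc (p : ℝ) ^ ((padicValNat p (m + 2) : ℤ))
      = (p : ℝ) ^ (padicValNat p (m + 2)) := zpow_natCast _ _
    _ ≤ (p : ℝ) ^ m := pow_le_pow_right₀ hp1 hv

/-- Lemma 3.2 of the paper in the case `m = 0` (odd prime).
If the formal derivative of `F(t) = ∑_{k≥0} a_k t^k` has `ℤ_p`-coefficients and `F`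
takes the same value at two distinct points `x ≠ y` of norm at most `p^{-n}`, then the
derivative series `∑_{k≥1} k a_k x^{k-1}` converges to a value of norm at most `p^{-n}`. -/
theorem stmt_2 (p : ℕ) [Fact p.Prime] (hodd : Odd p) (n : ℕ) (hn : 1 ≤ n)
    (a : ℕ → ℚ_[p])
    (hint : ∀ k : ℕ, 1 ≤ k → ‖(k : ℚ_[p]) * a k‖ ≤ 1)
    (x y : ℚ_[p]) (hxy : x ≠ y)
    (hx : ‖x‖ ≤ (p : ℝ) ^ (-(n : ℤ))) (hy : ‖y‖ ≤ (p : ℝ) ^ (-(n : ℤ)))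
    (s : ℚ_[p])
    (hsx : HasSum (fun k : ℕ => a k * x ^ k) s)
    (hsy : HasSum (fun k : ℕ => a k * y ^ k) s) :
    ∃ d : ℚ_[p],
      HasSum (fun k : ℕ => ((k + 1 : ℕ) : ℚ_[p]) * a (k + 1) * x ^ k) d ∧
      ‖d‖ ≤ (p : ℝ) ^ (-(n : ℤ)) := by
  have hp : p.Prime := Fact.out
  have hp2 : 2 ≤ p := hp.two_le
  have hp3 : 3 ≤ p := by
    rcases hodd with ⟨m, hm⟩; omega
  set r : ℝ := (p : ℝ) ^ (-(n : ℤ)) with hrdef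
  have hpR : (1 : ℝ) < (p : ℝ) := by exact_mod_cast hp.one_lt
  have hp0R : (0 : ℝ) < (p : ℝ) := by positivity
  have hr0 : 0 < r := zpow_pos hp0R _
  have hrinv : r ≤ (p : ℝ)⁻¹ := by
    rw [hrdef, ← zpow_neg_one]
    exact zpow_le_zpow_right₀ hpR.le (by omega)
  have hr1 : r ≤ 1 := by
    rw [hrdef, ← zpow_zero (p : ℝ)]
    exact zpow_le_zpow_right₀ hpR.le (by omega)
  have hrlt1 : r < 1 := lt_of_le_of_lt hrinv (by
    rw [inv_lt_one_iff₀]; right; exact hpR)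
  -- summability of the derivative series
  have hsum : Summable (fun k : ℕ => ((k + 1 : ℕ) : ℚ_[p]) * a (k + 1) * x ^ k) := by
    apply Summable.of_norm_bounded (summable_geometric_of_lt_one hr0.le hrlt1)
    intro k
    calc ‖((k + 1 : ℕ) : ℚ_[p]) * a (k + 1) * x ^ k‖
        = ‖((k + 1 : ℕ) : ℚ_[p]) * a (k + 1)‖ * ‖x‖ ^ k := by
          rw [norm_mul, norm_pow]
      _ ≤ 1 * r ^ k :=
          mul_le_mul (hint (k + 1) (by omega))
            (pow_le_pow_left₀ (norm_nonneg _) hx k) (by positivity) one_pos.le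
      _ = r ^ k := one_mul _
  obtain ⟨d, hd⟩ := hsum
  refine ⟨d, hd, ?_⟩
  set h : ℚ_[p] := y - x with hhdef
  have hh0 : h ≠ 0 := sub_ne_zero.mpr (Ne.symm hxy)
  have hhr : ‖h‖ ≤ r := by
    have h4 := Padic.nonarchimedean (p := p) y (-x)
    rw [← sub_eq_add_neg, norm_neg] at h4
    exact h4.trans (max_le hy hx)
  -- the shifted derivative series
  have hG : HasSum (fun k : ℕ => (k : ℚ_[p]) * a k * x ^ (k - 1) * h) (d * h) := by
    rw [← hasSum_nat_add_iff' 1]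
    simpa [Nat.add_sub_cancel] using hd.mul_right h
  have hE : HasSum
      (fun k : ℕ => a k * y ^ k - a k * x ^ k - (k : ℚ_[p]) * a k * x ^ (k - 1) * h)
      (s - s - d * h) := (hsy.sub hsx).sub hG
  -- per-term bound
  have key : ∀ k : ℕ,
      ‖a k * y ^ k - a k * x ^ k - (k : ℚ_[p]) * a k * x ^ (k - 1) * h‖ ≤ r * ‖h‖ := by
    intro k
    rcases Nat.eq_zero_or_pos k with rfl | hk
    · have h5 : a 0 * y ^ 0 - a 0 * x ^ 0 - ((0 : ℕ) : ℚ_[p]) * a 0 * x ^ (0 - 1) * h = 0 := by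
        push_cast; ring
      rw [h5, norm_zero]; positivity
    set T : ℕ → ℚ_[p] := fun i => a k * (h ^ i * x ^ (k - i) * (Nat.choose k i : ℚ_[p]))
      with hTdef
    have hyk : a k * y ^ k = ∑ i ∈ Finset.range (k + 1), T i := by
      have : y = h + x := by rw [hhdef]; ring
      rw [this, add_pow, Finset.mul_sum]
    have hsplit : ∑ i ∈ Finset.range (k + 1), T i
        = T 0 + (T 1 + ∑ i ∈ Finset.Ico 2 (k + 1), T i) := by
      rw [Finset.range_eq_Ico, Finset.sum_eq_sum_Ico_succ_bot (by omega),
        Finset.sum_eq_sum_Ico_succ_bot (by omega)]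
    have hT0 : T 0 = a k * x ^ k := by simp [hTdef]
    have hT1 : T 1 = (k : ℚ_[p]) * a k * x ^ (k - 1) * h := by
      simp only [hTdef, pow_one, Nat.choose_one_right]
      ring
    have hexpr : a k * y ^ k - a k * x ^ k - (k : ℚ_[p]) * a k * x ^ (k - 1) * h
        = ∑ i ∈ Finset.Ico 2 (k + 1), T i := by
      rw [hyk, hsplit, hT0, hT1]; ring
    rw [hexpr]
    apply IsUltrametricDist.norm_sum_le_of_forall_le_of_nonneg (by positivity)
    intro i hi
    rw [Finset.mem_Ico] at hi
    obtain ⟨m, rfl⟩ : ∃ m, i = m + 2 := ⟨i - 2, by omega⟩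
    -- rewrite T using the binomial identity
    have hki : k * Nat.choose (k - 1) (m + 1) = Nat.choose k (m + 2) * (m + 2) := by
      have h2 := Nat.add_one_mul_choose_eq (k - 1) (m + 1)
      rwa [Nat.sub_add_cancel (by omega)] at h2
    have hiQ : (((m + 2 : ℕ)) : ℚ_[p]) ≠ 0 := Nat.cast_ne_zero.mpr (by omega)
    have hCQ : (Nat.choose k (m + 2) : ℚ_[p])
        = (k : ℚ_[p]) * (Nat.choose (k - 1) (m + 1) : ℚ_[p]) * (((m + 2 : ℕ)) : ℚ_[p])⁻¹ := by
      have h3 := congrArg (Nat.cast : ℕ → ℚ_[p]) hki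
      rw [eq_comm, mul_inv_eq_iff_eq_mul₀ hiQ]
      push_cast at h3 ⊢
      linear_combination h3
    have hrw : T (m + 2) = ((k : ℚ_[p]) * a k) * (Nat.choose (k - 1) (m + 1) : ℚ_[p])
        * (((m + 2 : ℕ)) : ℚ_[p])⁻¹ * x ^ (k - (m + 2)) * h ^ (m + 2) := by
      rw [hTdef]; simp only; rw [hCQ]; ring
    have hhp : ‖h‖ ^ (m + 2) ≤ ‖h‖ * r * ((p : ℝ)⁻¹) ^ m := by
      have : ‖h‖ ^ (m + 2) = ‖h‖ * ‖h‖ * ‖h‖ ^ m := by ring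
      rw [this]
      have hhinv : ‖h‖ ≤ (p : ℝ)⁻¹ := hhr.trans hrinv
      exact mul_le_mul (mul_le_mul le_rfl hhr (norm_nonneg _) (norm_nonneg _))
        (pow_le_pow_left₀ (norm_nonneg _) hhinv m) (by positivity) (by positivity)
    have hx1 : ‖x‖ ^ (k - (m + 2)) ≤ 1 :=
      pow_le_one₀ (norm_nonneg _) (hx.trans hr1)
    calc ‖T (m + 2)‖
        = ‖(k : ℚ_[p]) * a k‖ * ‖(Nat.choose (k - 1) (m + 1) : ℚ_[p])‖
          * ‖(((m + 2 : ℕ)) : ℚ_[p])⁻¹‖ * ‖x‖ ^ (k - (m + 2)) * ‖h‖ ^ (m + 2) := by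
          rw [hrw, norm_mul, norm_mul, norm_mul, norm_mul, norm_pow, norm_pow]
      _ = (‖(k : ℚ_[p]) * a k‖ * ‖(Nat.choose (k - 1) (m + 1) : ℚ_[p])‖
            * ‖x‖ ^ (k - (m + 2)))
          * (‖(((m + 2 : ℕ)) : ℚ_[p])⁻¹‖ * ‖h‖ ^ (m + 2)) := by ring
      _ ≤ 1 * ((p : ℝ) ^ m * (‖h‖ * r * ((p : ℝ)⁻¹) ^ m)) := by
          apply mul_le_mul
          · exact mul_le_one₀ (mul_le_one₀ (hint k hk) (norm_nonneg _)
              (norm_natCast_le_one p _)) (by positivity) hx1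
          · exact mul_le_mul (key_inv p hp3 m) hhp (by positivity) (by positivity)
          · positivity
          · norm_num
      _ = r * ‖h‖ * ((p : ℝ) ^ m * ((p : ℝ)⁻¹) ^ m) := by ring
      _ = r * ‖h‖ := by
          rw [← mul_pow, mul_inv_cancel₀ (ne_of_gt hp0R), one_pow, mul_one]
  -- pass to the limit
  have hnorm : ‖s - s - d * h‖ ≤ r * ‖h‖ := by
    refine le_of_tendsto' hE.tendsto_sum_nat.norm fun m => ?_
    exact IsUltrametricDist.norm_sum_le_of_forall_le_of_nonneg (by positivity)
      fun i _ => key i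
  have hdh : ‖d‖ * ‖h‖ ≤ r * ‖h‖ := by
    rw [← norm_mul]
    calc ‖d * h‖ = ‖s - s - d * h‖ := by rw [sub_self, zero_sub, norm_neg]
      _ ≤ r * ‖h‖ := hnorm
  exact le_of_mul_le_mul_right hdh (norm_pos_iff.mpr hh0)
end
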